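/- Let 0 < γ₁ < γ₂, set γ := γ₁γ₂/(γ₁+γ₂), and let (Ω, 𝓐, P) be a probability space with W : [0,1] × Ω → ℝ a jointly measurable stochastic process such that each W_s is square-integrable with E[W_s] = 0 for all s ∈ [0,1], and E[W_s W_t] = min(s,t) for all s, t ∈ [0,1]. Then the random variable Z := (γ₁γ₂/(γ₁+γ₂)²) ∫₀¹ s^{−γ/γ₂ − 1} W_s ds + (γ₂/(γ₁+γ₂)) W_1 is centered, square-integrable, and E[Z²] = γ₂² / (γ₂² − γ₁²). -/

import Mathlib

open Filter Set MeasureTheory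
open scoped Interval
set_option maxHeartbeats 2000000

lemma aux_integrable_mul {Ω : Type*} [MeasurableSpace Ω] {P : Measure Ω}
    {f g : Ω → ℝ} (hf : MemLp f 2 P) (hg : MemLp g 2 P) :
    Integrable (fun ω => f ω * g ω) P := by
  refine ((hf.integrable_sq.add hg.integrable_sq).const_mul (1/2 : ℝ)).mono'
    (hf.aestronglyMeasurable.mul hg.aestronglyMeasurable)
    (Eventually.of_forall fun ω => ?_)
  simp only [Pi.add_apply]
  have h1 := sq_nonneg (|f ω| - |g ω|)
  have h2 := sq_abs (f ω); have h3 := sq_abs (g ω)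
  rw [Real.norm_eq_abs, abs_mul]
  nlinarith [abs_nonneg (f ω), abs_nonneg (g ω)]

lemma aux_cs {Ω : Type*} [MeasurableSpace Ω] {P : Measure Ω}
    {f g : Ω → ℝ} (hf : MemLp f 2 P) (hg : MemLp g 2 P) :
    ∫ ω, |f ω * g ω| ∂P ≤ Real.sqrt (∫ ω, f ω ^ 2 ∂P) * Real.sqrt (∫ ω, g ω ^ 2 ∂P) := by
  have hpq : Real.HolderConjugate 2 2 := Real.HolderConjugate.two_two
  have h2 : ENNReal.ofReal (2:ℝ) = 2 := by norm_num
  have key := MeasureTheory.integral_mul_norm_le_Lp_mul_Lq (μ := P) hpq (h2 ▸ hf) (h2 ▸ hg)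
  have e1 : ∫ ω, ‖f ω‖ ^ (2:ℝ) ∂P = ∫ ω, f ω ^ 2 ∂P := by
    apply integral_congr_ae; refine Eventually.of_forall fun ω => ?_
    show ‖_‖ ^ (2:ℝ) = _ ^ 2
    rw [Real.norm_eq_abs, show (2:ℝ) = ((2:ℕ):ℝ) by norm_num, Real.rpow_natCast, sq_abs]
  have e2 : ∫ ω, ‖g ω‖ ^ (2:ℝ) ∂P = ∫ ω, g ω ^ 2 ∂P := by
    apply integral_congr_ae; refine Eventually.of_forall fun ω => ?_
    show ‖_‖ ^ (2:ℝ) = _ ^ 2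
    rw [Real.norm_eq_abs, show (2:ℝ) = ((2:ℕ):ℝ) by norm_num, Real.rpow_natCast, sq_abs]
  calc ∫ ω, |f ω * g ω| ∂P = ∫ ω, ‖f ω‖ * ‖g ω‖ ∂P := by
        simp [abs_mul, Real.norm_eq_abs]
    _ ≤ (∫ ω, ‖f ω‖ ^ (2:ℝ) ∂P) ^ ((1:ℝ)/2) * (∫ ω, ‖g ω‖ ^ (2:ℝ) ∂P) ^ ((1:ℝ)/2) := key
    _ = Real.sqrt (∫ ω, f ω ^ 2 ∂P) * Real.sqrt (∫ ω, g ω ^ 2 ∂P) := by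
        rw [e1, e2, Real.sqrt_eq_rpow, Real.sqrt_eq_rpow]

lemma aux_integrableOn_rpow {r : ℝ} (hr : -1 < r) :
    IntegrableOn (fun s : ℝ => s ^ r) (Ioc (0:ℝ) 1) := by
  have := intervalIntegral.intervalIntegrable_rpow' (a := (0:ℝ)) (b := 1) hr
  rwa [intervalIntegrable_iff_integrableOn_Ioc_of_le zero_le_one] at this

lemma aux_integral_rpow {r : ℝ} (hr : -1 < r) :
    ∫ s in Ioc (0:ℝ) 1, s ^ r = 1/(r+1) := by
  rw [← intervalIntegral.integral_of_le zero_le_one,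
    integral_rpow (Or.inl hr), Real.one_rpow, Real.zero_rpow (by linarith)]
  ring


lemma aux_min_le_sqrt {s t : ℝ} (hs : 0 ≤ s) (ht : 0 ≤ t) :
    min s t ≤ Real.sqrt s * Real.sqrt t := by
  rcases le_total s t with h | h
  · rw [min_eq_left h]
    calc s = Real.sqrt s * Real.sqrt s := (Real.mul_self_sqrt hs).symm
      _ ≤ Real.sqrt s * Real.sqrt t :=
        mul_le_mul_of_nonneg_left (Real.sqrt_le_sqrt h) (Real.sqrt_nonneg s)
  · rw [min_eq_right h]
    calc t = Real.sqrt t * Real.sqrt t := (Real.mul_self_sqrt ht).symm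
      _ ≤ Real.sqrt s * Real.sqrt t :=
        mul_le_mul_of_nonneg_right (Real.sqrt_le_sqrt h) (Real.sqrt_nonneg t)

-- inner integral: for 0 < s ≤ 1, ∫ t in Ioc 0 1, t^q * min s t
lemma aux_inner {q s : ℝ} (hq1gtm1 : -1 < q + 1) (hqne : q ≠ -1) (hs0 : 0 < s) (hs1 : s ≤ 1) :
    ∫ t in Ioc (0:ℝ) 1, t ^ q * min s t
      = s ^ (q+2) / (q+2) + s * ((1 - s ^ (q+1)) / (q+1)) := by
  have h0nu : (0:ℝ) ∉ [[s, 1]] := by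
    rw [Set.mem_uIcc]; push_neg; constructor <;> intro h <;> linarith
  have intA : IntegrableOn (fun t : ℝ => t ^ q * min s t) (Ioc 0 s) := by
    have hbase : IntegrableOn (fun t : ℝ => t ^ (q+1)) (Ioc 0 s) := by
      have := intervalIntegral.intervalIntegrable_rpow' (a := (0:ℝ)) (b := s) hq1gtm1
      rwa [intervalIntegrable_iff_integrableOn_Ioc_of_le hs0.le] at this
    refine hbase.congr_fun (fun t ht => ?_) measurableSet_Ioc
    rw [min_eq_right ht.2]; exact Real.rpow_add_one (ne_of_gt ht.1) q
  have intB : IntegrableOn (fun t : ℝ => t ^ q * min s t) (Ioc s 1) := by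
    have hbase : IntegrableOn (fun t : ℝ => t ^ q * s) (Ioc s 1) := by
      have := (intervalIntegral.intervalIntegrable_rpow (μ := volume) (r := q) (a := s) (b := 1) (Or.inr h0nu)).mul_const s
      rwa [intervalIntegrable_iff_integrableOn_Ioc_of_le hs1] at this
    refine hbase.congr_fun (fun t ht => ?_) measurableSet_Ioc
    rw [min_eq_left ht.1.le]
  have hsplit : Ioc (0:ℝ) 1 = Ioc 0 s ∪ Ioc s 1 := (Ioc_union_Ioc_eq_Ioc hs0.le hs1).symm
  rw [hsplit, setIntegral_union (Ioc_disjoint_Ioc_of_le le_rfl) measurableSet_Ioc intA intB]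
  have hA : ∫ t in Ioc (0:ℝ) s, t ^ q * min s t = s ^ (q+2) / (q+2) := by
    rw [setIntegral_congr_ae measurableSet_Ioc
      (Eventually.of_forall (fun t (ht : t ∈ Ioc (0:ℝ) s) => by
        rw [min_eq_right ht.2, ← Real.rpow_add_one (ne_of_gt ht.1)]))]
    rw [← intervalIntegral.integral_of_le hs0.le, integral_rpow (Or.inl hq1gtm1),
      Real.zero_rpow (by linarith), show q + 1 + 1 = q + 2 by ring]
    ring
  have hB : ∫ t in Ioc s 1, t ^ q * min s t = s * ((1 - s ^ (q+1)) / (q+1)) := by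
    rw [setIntegral_congr_ae measurableSet_Ioc
      (Eventually.of_forall (fun t (ht : t ∈ Ioc s 1) => by rw [min_eq_left ht.1.le]))]
    rw [MeasureTheory.integral_mul_const, ← intervalIntegral.integral_of_le hs1,
      integral_rpow (Or.inr ⟨hqne, h0nu⟩), Real.one_rpow]
    ring
  rw [hA, hB]

lemma aux_detint {q : ℝ} (hq1gtm1 : -1 < q + 1) (hq1lt : q + 1 < 0) (hq1gt : -(1:ℝ)/2 < q + 1) :
    ∫ z, (z.1 ^ q * z.2 ^ q) * min z.1 z.2
      ∂((volume.restrict (Ioc (0:ℝ) 1)).prod (volume.restrict (Ioc (0:ℝ) 1)))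
    = (1/(q+2) - 1/(q+1)) * (1/(2*q+3)) + (1/(q+1)) * (1/(q+2)) := by
  set μ : Measure ℝ := volume.restrict (Ioc 0 1) with hμ_def
  have hqne : q ≠ -1 := fun h => by rw [h] at hq1lt; norm_num at hq1lt
  have hq_half : (-1:ℝ) < q + 1/2 := by linarith
  have h2q2 : (-1:ℝ) < 2*q + 2 := by linarith
  have hae : ∀ᵐ z ∂(μ.prod μ), z ∈ (Ioc (0:ℝ) 1) ×ˢ (Ioc (0:ℝ) 1) := by
    rw [hμ_def, Measure.prod_restrict]
    exact ae_restrict_mem (measurableSet_Ioc.prod measurableSet_Ioc)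
  have hmeas : Measurable (fun z : ℝ × ℝ => (z.1 ^ q * z.2 ^ q) * min z.1 z.2) := by
    measurability
  have hint : Integrable (fun z : ℝ × ℝ => (z.1 ^ q * z.2 ^ q) * min z.1 z.2) (μ.prod μ) := by
    have hb : Integrable (fun z : ℝ × ℝ => z.1 ^ (q + 1/2) * z.2 ^ (q + 1/2)) (μ.prod μ) :=
      (aux_integrableOn_rpow hq_half).mul_prod (aux_integrableOn_rpow hq_half)
    refine hb.mono' hmeas.aestronglyMeasurable ?_
    filter_upwards [hae] with z hz
    obtain ⟨⟨hz10, hz11⟩, hz20, hz21⟩ := hz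
    have h1 : (0:ℝ) ≤ z.1 ^ q := Real.rpow_nonneg hz10.le q
    have h2 : (0:ℝ) ≤ z.2 ^ q := Real.rpow_nonneg hz20.le q
    have hm0 : (0:ℝ) ≤ min z.1 z.2 := le_min hz10.le hz20.le
    rw [Real.norm_eq_abs, abs_of_nonneg (by positivity)]
    calc z.1 ^ q * z.2 ^ q * min z.1 z.2
        ≤ z.1 ^ q * z.2 ^ q * (Real.sqrt z.1 * Real.sqrt z.2) :=
          mul_le_mul_of_nonneg_left (aux_min_le_sqrt hz10.le hz20.le) (by positivity)
      _ = z.1 ^ (q + 1/2) * z.2 ^ (q + 1/2) := by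
          rw [Real.sqrt_eq_rpow, Real.sqrt_eq_rpow, Real.rpow_add hz10, Real.rpow_add hz20]
          ring
  rw [integral_prod _ hint]
  have houter : ∀ s ∈ Ioc (0:ℝ) 1,
      ∫ t, (s ^ q * t ^ q) * min s t ∂μ
        = (1/(q+2) - 1/(q+1)) * s ^ (2*q+2) + (1/(q+1)) * s ^ (q+1) := by
    intro s hs
    have : ∫ t, (s ^ q * t ^ q) * min s t ∂μ = s ^ q * ∫ t, t ^ q * min s t ∂μ := by
      rw [← MeasureTheory.integral_const_mul]
      congr 1; funext t; ring
    rw [this, aux_inner hq1gtm1 hqne hs.1 hs.2]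
    have e1 : s ^ q * s ^ (q+2) = s ^ (2*q+2) := by
      rw [← Real.rpow_add hs.1]; ring_nf
    have e2 : s ^ q * s = s ^ (q+1) := (Real.rpow_add_one (ne_of_gt hs.1) q).symm
    have e3 : s ^ (q+1) * s ^ (q+1) = s ^ (2*q+2) := by
      rw [← Real.rpow_add hs.1]; ring_nf
    rw [show s ^ q * (s ^ (q+2) / (q+2) + s * ((1 - s ^ (q+1)) / (q+1)))
        = (s ^ q * s ^ (q+2)) / (q+2) + (s ^ q * s) / (q+1)
          - ((s ^ q * s) * s ^ (q+1)) / (q+1) by ring, e1, e2, e3]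
    field_simp
    ring
  rw [setIntegral_congr_ae measurableSet_Ioc (Eventually.of_forall
      (fun s hs => houter s hs))]
  have i1 : IntegrableOn (fun s : ℝ => (1/(q+2) - 1/(q+1)) * s ^ (2*q+2)) (Ioc (0:ℝ) 1) :=
    (aux_integrableOn_rpow h2q2).const_mul _
  have i2 : IntegrableOn (fun s : ℝ => (1/(q+1)) * s ^ (q+1)) (Ioc (0:ℝ) 1) :=
    (aux_integrableOn_rpow hq1gtm1).const_mul _
  rw [integral_add i1 i2, MeasureTheory.integral_const_mul, MeasureTheory.integral_const_mul,
    aux_integral_rpow h2q2, aux_integral_rpow hq1gtm1,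
    show 2*q+2+1 = 2*q+3 by ring, show q+1+1 = q+2 by ring]


/-- With `0 < γ₁ < γ₂`, `γ = γ₁γ₂/(γ₁+γ₂)`, and `W` a centered jointly
measurable process on `[0,1]` with covariance `min s t`, the random variable
`Z = (γ₁γ₂/(γ₁+γ₂)²) ∫₀¹ s^(-γ/γ₂-1) W s ds + (γ₂/(γ₁+γ₂)) W 1` is centered,
square-integrable, and `E[Z²] = γ₂²/(γ₂² - γ₁²)`. -/
theorem stmt_7 (γ₁ γ₂ γ : ℝ) (hγ₁ : 0 < γ₁) (hγ₁₂ : γ₁ < γ₂)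
    (hγ : γ = γ₁ * γ₂ / (γ₁ + γ₂))
    {Ω : Type*} [MeasurableSpace Ω] (P : Measure Ω) [IsProbabilityMeasure P]
    (W : ℝ → Ω → ℝ)
    (hWmeas : Measurable (fun p : ℝ × Ω => W p.1 p.2))
    (hWL2 : ∀ s ∈ Icc (0 : ℝ) 1, MemLp (W s) 2 P)
    (hWcentered : ∀ s ∈ Icc (0 : ℝ) 1, (∫ ω, W s ω ∂P) = 0)
    (hWcov : ∀ s ∈ Icc (0 : ℝ) 1, ∀ t ∈ Icc (0 : ℝ) 1,
      (∫ ω, W s ω * W t ω ∂P) = min s t)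
    (Z : Ω → ℝ)
    (hZ : ∀ ω, Z ω = γ₁ * γ₂ / (γ₁ + γ₂) ^ 2 *
        (∫ s in Ioc (0 : ℝ) 1, s ^ (-γ / γ₂ - 1) * W s ω) +
      γ₂ / (γ₁ + γ₂) * W 1 ω) :
    (∫ ω, Z ω ∂P) = 0 ∧ MemLp Z 2 P ∧
      (∫ ω, Z ω ^ 2 ∂P) = γ₂ ^ 2 / (γ₂ ^ 2 - γ₁ ^ 2) := by
  have hγ2 : (0:ℝ) < γ₂ := hγ₁.trans hγ₁₂
  have hS : (0:ℝ) < γ₁ + γ₂ := by linarith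
  set q : ℝ := -γ / γ₂ - 1 with hq_def
  set c₁ : ℝ := γ₁ * γ₂ / (γ₁ + γ₂) ^ 2 with hc1_def
  set c₂ : ℝ := γ₂ / (γ₁ + γ₂) with hc2_def
  have hq1 : q + 1 = -(γ₁ / (γ₁ + γ₂)) := by
    rw [hq_def, hγ]; field_simp; ring
  have hfrac : γ₁ / (γ₁ + γ₂) < 1/2 := by rw [div_lt_iff₀ hS]; linarith
  have hfrac0 : 0 < γ₁ / (γ₁ + γ₂) := div_pos hγ₁ hS
  have hq1lt : q + 1 < 0 := by rw [hq1]; linarith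
  have hq1gt : -(1:ℝ)/2 < q + 1 := by rw [hq1]; linarith
  have hq1gtm1 : (-1:ℝ) < q + 1 := by rw [hq1]; linarith
  have hq_half : (-1:ℝ) < q + 1/2 := by rw [show q + 1/2 = (q+1) - 1/2 by ring, hq1]; linarith
  set μ : Measure ℝ := volume.restrict (Ioc 0 1) with hμ_def
  set g : Ω → ℝ := fun ω => ∫ s in Ioc (0:ℝ) 1, s ^ q * W s ω with hg_def
  have hmem : ∀ s ∈ Ioc (0:ℝ) 1, s ∈ Icc (0:ℝ) 1 := fun s hs => ⟨hs.1.le, hs.2⟩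
  have h1I : (1:ℝ) ∈ Icc (0:ℝ) 1 := ⟨zero_le_one, le_refl 1⟩
  have hvar : ∀ s ∈ Icc (0:ℝ) 1, ∫ ω, W s ω ^ 2 ∂P = s := by
    intro s hs
    have := hWcov s hs s hs
    simpa [min_self, pow_two] using this
  have habs : ∀ s ∈ Icc (0:ℝ) 1, ∀ t ∈ Icc (0:ℝ) 1,
      ∫ ω, |W s ω * W t ω| ∂P ≤ Real.sqrt s * Real.sqrt t := by
    intro s hs t ht
    have := aux_cs (hWL2 s hs) (hWL2 t ht)
    rwa [hvar s hs, hvar t ht] at this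
  have habs1 : ∀ s ∈ Icc (0:ℝ) 1, ∫ ω, |W s ω| ∂P ≤ Real.sqrt s := by
    intro s hs
    have hone : MemLp (fun _ : Ω => (1:ℝ)) 2 P := memLp_const 1
    have := aux_cs (hWL2 s hs) hone
    simpa [hvar s hs] using this
  have hae2 : ∀ᵐ z ∂(μ.prod μ), z ∈ (Ioc (0:ℝ) 1) ×ˢ (Ioc (0:ℝ) 1) := by
    rw [hμ_def, Measure.prod_restrict]
    exact ae_restrict_mem (measurableSet_Ioc.prod measurableSet_Ioc)
  -- measurability
  have hfm : Measurable (fun z : ℝ × Ω => z.1 ^ q * W z.1 z.2) := by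
    have h1 : Measurable (fun z : ℝ × Ω => z.1 ^ q) := by measurability
    exact h1.mul hWmeas
  have hfm4 : Measurable (fun z : ℝ × Ω => z.1 ^ q * W z.1 z.2 * W 1 z.2) :=
    hfm.mul (hWmeas.comp (measurable_const.prodMk measurable_snd))
  have hfm2 : Measurable (fun z : (ℝ × ℝ) × Ω =>
      (z.1.1 ^ q * W z.1.1 z.2) * (z.1.2 ^ q * W z.1.2 z.2)) := by
    have m1 : Measurable (fun z : (ℝ × ℝ) × Ω => (z.1.1, z.2)) :=
      measurable_fst.fst.prodMk measurable_snd
    have m2 : Measurable (fun z : (ℝ × ℝ) × Ω => (z.1.2, z.2)) :=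
      measurable_fst.snd.prodMk measurable_snd
    exact (hfm.comp m1).mul (hfm.comp m2)
  -- integrability over products
  have K2 : Integrable (fun z : ℝ × Ω => z.1 ^ q * W z.1 z.2) (μ.prod P) := by
    rw [integrable_prod_iff hfm.aestronglyMeasurable]
    constructor
    · filter_upwards [ae_restrict_mem measurableSet_Ioc] with s hs
      exact ((hWL2 s (hmem s hs)).integrable one_le_two).const_mul _
    · refine Integrable.mono' (g := fun s : ℝ => s ^ (q + 1/2))
        (aux_integrableOn_rpow hq_half)
        (hfm.norm.aestronglyMeasurable.integral_prod_right') ?_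
      filter_upwards [ae_restrict_mem measurableSet_Ioc] with s hs
      have hs0 := hs.1
      have hpow : (0:ℝ) ≤ s ^ q := Real.rpow_nonneg hs0.le q
      rw [Real.norm_eq_abs, abs_of_nonneg (integral_nonneg fun ω => norm_nonneg _)]
      calc ∫ ω, ‖s ^ q * W s ω‖ ∂P = s ^ q * ∫ ω, |W s ω| ∂P := by
            simp_rw [norm_mul, Real.norm_eq_abs, abs_of_nonneg hpow]
            exact MeasureTheory.integral_const_mul _ _
        _ ≤ s ^ q * Real.sqrt s := mul_le_mul_of_nonneg_left (habs1 s (hmem s hs)) hpow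
        _ = s ^ (q + 1/2) := by rw [Real.sqrt_eq_rpow, Real.rpow_add hs0]
  have K4 : Integrable (fun z : ℝ × Ω => z.1 ^ q * W z.1 z.2 * W 1 z.2) (μ.prod P) := by
    rw [integrable_prod_iff hfm4.aestronglyMeasurable]
    constructor
    · filter_upwards [ae_restrict_mem measurableSet_Ioc] with s hs
      have := (aux_integrable_mul (hWL2 s (hmem s hs)) (hWL2 1 h1I)).const_mul (s ^ q)
      exact this.congr (Eventually.of_forall fun ω => by ring)
    · refine Integrable.mono' (g := fun s : ℝ => s ^ (q + 1/2))
        (aux_integrableOn_rpow hq_half)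
        (hfm4.norm.aestronglyMeasurable.integral_prod_right') ?_
      filter_upwards [ae_restrict_mem measurableSet_Ioc] with s hs
      have hs0 := hs.1
      have hpow : (0:ℝ) ≤ s ^ q := Real.rpow_nonneg hs0.le q
      rw [Real.norm_eq_abs, abs_of_nonneg (integral_nonneg fun ω => norm_nonneg _)]
      calc ∫ ω, ‖s ^ q * W s ω * W 1 ω‖ ∂P
          = s ^ q * ∫ ω, |W s ω * W 1 ω| ∂P := by
            simp_rw [mul_assoc, norm_mul, Real.norm_eq_abs, abs_of_nonneg hpow, ← abs_mul]
            exact MeasureTheory.integral_const_mul _ _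
        _ ≤ s ^ q * (Real.sqrt s * Real.sqrt 1) :=
            mul_le_mul_of_nonneg_left (habs s (hmem s hs) 1 h1I) hpow
        _ = s ^ (q + 1/2) := by
            rw [Real.sqrt_one, mul_one, Real.sqrt_eq_rpow, Real.rpow_add hs0]
  have K3 : Integrable (fun z : (ℝ × ℝ) × Ω =>
      (z.1.1 ^ q * W z.1.1 z.2) * (z.1.2 ^ q * W z.1.2 z.2)) ((μ.prod μ).prod P) := by
    rw [integrable_prod_iff hfm2.aestronglyMeasurable]
    constructor
    · filter_upwards [hae2] with z hz
      have := (aux_integrable_mul (hWL2 z.1 (hmem z.1 hz.1)) (hWL2 z.2 (hmem z.2 hz.2))).const_mul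
        (z.1 ^ q * z.2 ^ q)
      exact this.congr (Eventually.of_forall fun ω => by ring)
    · refine Integrable.mono'
        (g := fun z : ℝ × ℝ => z.1 ^ (q + 1/2) * z.2 ^ (q + 1/2))
        ((aux_integrableOn_rpow hq_half).mul_prod (aux_integrableOn_rpow hq_half))
        (hfm2.norm.aestronglyMeasurable.integral_prod_right') ?_
      filter_upwards [hae2] with z hz
      obtain ⟨hz1, hz2⟩ := hz
      have hp1 : (0:ℝ) ≤ z.1 ^ q := Real.rpow_nonneg hz1.1.le q
      have hp2 : (0:ℝ) ≤ z.2 ^ q := Real.rpow_nonneg hz2.1.le q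
      rw [Real.norm_eq_abs, abs_of_nonneg (integral_nonneg fun ω => norm_nonneg _)]
      calc ∫ ω, ‖(z.1 ^ q * W z.1 ω) * (z.2 ^ q * W z.2 ω)‖ ∂P
          = (z.1 ^ q * z.2 ^ q) * ∫ ω, |W z.1 ω * W z.2 ω| ∂P := by
            rw [← MeasureTheory.integral_const_mul]
            apply integral_congr_ae
            filter_upwards with ω
            have hrr : (z.1 ^ q * W z.1 ω) * (z.2 ^ q * W z.2 ω)
                = (z.1 ^ q * z.2 ^ q) * (W z.1 ω * W z.2 ω) := by ring
            rw [Real.norm_eq_abs, hrr, abs_mul, abs_of_nonneg (mul_nonneg hp1 hp2)]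
        _ ≤ (z.1 ^ q * z.2 ^ q) * (Real.sqrt z.1 * Real.sqrt z.2) :=
            mul_le_mul_of_nonneg_left
              (habs z.1 (hmem z.1 hz1) z.2 (hmem z.2 hz2)) (mul_nonneg hp1 hp2)
        _ = z.1 ^ (q + 1/2) * z.2 ^ (q + 1/2) := by
            rw [Real.sqrt_eq_rpow, Real.sqrt_eq_rpow,
              Real.rpow_add hz1.1, Real.rpow_add hz2.1]
            ring
  -- g facts
  have hg_int : Integrable g P := K2.integral_prod_right
  have hg_sq : ∀ ω, g ω ^ 2 = ∫ z, (z.1 ^ q * W z.1 ω) * (z.2 ^ q * W z.2 ω) ∂(μ.prod μ) := by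
    intro ω
    rw [pow_two, hg_def]
    exact (integral_prod_mul (μ := μ) (ν := μ) (fun s => s ^ q * W s ω)
      (fun t => t ^ q * W t ω)).symm
  have hg_sq_int : Integrable (fun ω => g ω ^ 2) P := by
    have := K3.integral_prod_right
    exact this.congr (Eventually.of_forall fun ω => (hg_sq ω).symm)
  have hMem_g : MemLp g 2 P :=
    (memLp_two_iff_integrable_sq hg_int.aestronglyMeasurable).mpr hg_sq_int
  have hEg : ∫ ω, g ω ∂P = 0 := by
    have h1 : ∫ ω, g ω ∂P = ∫ s, ∫ ω, s ^ q * W s ω ∂P ∂μ := by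
      rw [show (∫ ω, g ω ∂P)
          = ∫ ω, ∫ s, (fun z : ℝ × Ω => z.1 ^ q * W z.1 z.2) (s, ω) ∂μ ∂P from rfl,
        ← integral_prod_symm _ K2, integral_prod _ K2]
    rw [h1]
    have h2 : ∀ᵐ s ∂μ, ∫ ω, s ^ q * W s ω ∂P = 0 := by
      filter_upwards [ae_restrict_mem measurableSet_Ioc] with s hs
      rw [MeasureTheory.integral_const_mul, hWcentered s (hmem s hs), mul_zero]
    rw [integral_congr_ae h2, integral_zero]
  have hE_cross : ∫ ω, g ω * W 1 ω ∂P = 1/(q+2) := by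
    have h0 : ∀ ω, g ω * W 1 ω = ∫ s, s ^ q * W s ω * W 1 ω ∂μ := fun ω =>
      (MeasureTheory.integral_mul_const _ _).symm
    rw [integral_congr_ae (Eventually.of_forall h0)]
    rw [show (∫ ω, ∫ s, s ^ q * W s ω * W 1 ω ∂μ ∂P)
        = ∫ ω, ∫ s, (fun z : ℝ × Ω => z.1 ^ q * W z.1 z.2 * W 1 z.2) (s, ω) ∂μ ∂P from rfl,
      ← integral_prod_symm _ K4, integral_prod _ K4]
    have h2 : ∀ᵐ s ∂μ, ∫ ω, s ^ q * W s ω * W 1 ω ∂P = s ^ (q+1) := by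
      filter_upwards [ae_restrict_mem measurableSet_Ioc] with s hs
      simp_rw [mul_assoc]
      rw [MeasureTheory.integral_const_mul, hWcov s (hmem s hs) 1 h1I,
        min_eq_left hs.2, ← Real.rpow_add_one (ne_of_gt hs.1)]
    rw [integral_congr_ae h2, aux_integral_rpow hq1gtm1, show q+1+1 = q+2 by ring]
  have hE_g2 : ∫ ω, g ω ^ 2 ∂P
      = (1/(q+2) - 1/(q+1)) * (1/(2*q+3)) + (1/(q+1)) * (1/(q+2)) := by
    have step1 : ∫ ω, g ω ^ 2 ∂P
        = ∫ z, (z.1.1 ^ q * W z.1.1 z.2) * (z.1.2 ^ q * W z.1.2 z.2) ∂((μ.prod μ).prod P) := by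
      rw [integral_prod_symm _ K3]
      exact integral_congr_ae (Eventually.of_forall fun ω => hg_sq ω)
    have step2 : ∫ z, (z.1.1 ^ q * W z.1.1 z.2) * (z.1.2 ^ q * W z.1.2 z.2) ∂((μ.prod μ).prod P)
        = ∫ z, (z.1 ^ q * z.2 ^ q) * min z.1 z.2 ∂(μ.prod μ) := by
      rw [integral_prod _ K3]
      apply integral_congr_ae
      filter_upwards [hae2] with z hz
      have h1 := hmem z.1 hz.1
      have h2 := hmem z.2 hz.2
      simp_rw [show ∀ ω, (z.1 ^ q * W z.1 ω) * (z.2 ^ q * W z.2 ω)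
          = (z.1 ^ q * z.2 ^ q) * (W z.1 ω * W z.2 ω) from fun ω => by ring]
      rw [MeasureTheory.integral_const_mul, hWcov z.1 h1 z.2 h2]
    rw [step1, step2, hμ_def]
    exact aux_detint hq1gtm1 hq1lt hq1gt
  -- conclusion
  have hZeq : Z = fun ω => c₁ * g ω + c₂ * W 1 ω := funext hZ
  have hW1 : MemLp (W 1) 2 P := hWL2 1 h1I
  have hmemZ : MemLp Z 2 P := by
    rw [hZeq]
    exact (hMem_g.const_mul c₁).add (hW1.const_mul c₂)
  refine ⟨?_, hmemZ, ?_⟩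
  · rw [hZeq]
    rw [integral_add (hg_int.const_mul c₁) ((hW1.integrable one_le_two).const_mul c₂),
      MeasureTheory.integral_const_mul, MeasureTheory.integral_const_mul, hEg,
      hWcentered 1 h1I]
    ring
  · have hcross_int : Integrable (fun ω => g ω * W 1 ω) P := aux_integrable_mul hMem_g hW1
    have hW1sq : Integrable (fun ω => W 1 ω ^ 2) P := hW1.integrable_sq
    have hsum1 : Integrable (fun ω => c₁^2 * g ω ^ 2 + (2*c₁*c₂) * (g ω * W 1 ω)) P :=
      (hg_sq_int.const_mul _).add (hcross_int.const_mul _)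
    have e : ∫ ω, Z ω ^ 2 ∂P
        = ∫ ω, ((c₁^2 * g ω ^ 2 + (2*c₁*c₂) * (g ω * W 1 ω)) + c₂^2 * W 1 ω ^ 2) ∂P := by
      apply integral_congr_ae
      filter_upwards with ω
      simp only [hZ, hg_def]
      ring
    rw [e, integral_add hsum1 (hW1sq.const_mul _),
      integral_add (hg_sq_int.const_mul _) (hcross_int.const_mul _),
      MeasureTheory.integral_const_mul, MeasureTheory.integral_const_mul,
      MeasureTheory.integral_const_mul, hE_g2, hE_cross, hvar 1 h1I]
    -- algebra
    have hne1 : γ₁ + γ₂ ≠ 0 := ne_of_gt hS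
    have hne2 : γ₂ ≠ 0 := ne_of_gt hγ2
    have hne3 : γ₁ ≠ 0 := ne_of_gt hγ₁
    have hne4 : γ₂ - γ₁ ≠ 0 := ne_of_gt (by linarith)
    have hne5 : γ₂^2 - γ₁^2 ≠ 0 := ne_of_gt (by nlinarith)
    have eq2 : q + 2 = γ₂ / (γ₁ + γ₂) := by
      rw [show q + 2 = (q+1) + 1 by ring, hq1]
      field_simp
      ring
    have eq3 : 2*q + 3 = (γ₂ - γ₁) / (γ₁ + γ₂) := by
      rw [show 2*q + 3 = 2*(q+1) + 1 by ring, hq1]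
      field_simp
      ring
    have r1 : 1/(q+1) = -((γ₁+γ₂)/γ₁) := by
      rw [hq1, one_div, inv_neg, inv_div]
    have r2 : 1/(q+2) = (γ₁+γ₂)/γ₂ := by rw [eq2, one_div_div]
    have r3 : 1/(2*q+3) = (γ₁+γ₂)/(γ₂-γ₁) := by rw [eq3, one_div_div]
    rw [r1, r2, r3, hc1_def, hc2_def]
    field_simp
    ring
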